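/- Assume 2r < σ². Then for every fixed x > 0 the map t ↦ Z(t,x) is nonincreasing on [0,T], and for every fixed t ∈ [0,T] the map x ↦ Z(t,x) is nondecreasing on (0,∞). -/

import Mathlib

open Real Set MeasureTheory

noncomputable section

/-- The standard normal cumulative distribution function `Φ`. -/
def stdCDF (y : ℝ) : ℝ := ∫ z in Iic y, Real.exp (-z ^ 2 / 2) / Real.sqrt (2 * π)

/-- The finite-horizon Azéma supermartingale function `Z(t,x)` (with `α = 2r/σ² - 1`):
for `t < T`, `Z(t,x) = min{Φ(d₁) + (L/x)^α Φ(d₂), 1}`, and at `t = T` it is `1` for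
`x ≥ L` and `0` for `x < L`. -/
def Zt (r σ L T t x : ℝ) : ℝ :=
  if t < T then
    min (stdCDF ((-Real.log (L / x) + (r - σ ^ 2 / 2) * (T - t)) / (σ * Real.sqrt (T - t))) +
        (L / x) ^ (2 * r / σ ^ 2 - 1) *
          stdCDF ((-Real.log (L / x) - (r - σ ^ 2 / 2) * (T - t)) / (σ * Real.sqrt (T - t)))) 1
  else if L ≤ x then 1 else 0

/-- The standard normal density. -/
def gpdf (z : ℝ) : ℝ := Real.exp (-z ^ 2 / 2) / Real.sqrt (2 * π)

lemma gpdf_pos (z : ℝ) : 0 < gpdf z := by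
  apply div_pos (exp_pos _)
  exact Real.sqrt_pos.2 (by positivity)

lemma gpdf_cont : Continuous gpdf := by
  unfold gpdf; fun_prop

lemma gpdf_integrable : Integrable gpdf := by
  have h : Integrable (fun z : ℝ => Real.exp (-(1/2) * z ^ 2)) :=
    integrable_exp_neg_mul_sq (by norm_num)
  have := h.div_const (Real.sqrt (2 * π))
  convert this using 2 with z
  unfold gpdf
  ring_nf

lemma integral_gpdf : ∫ z : ℝ, gpdf z = 1 := by
  unfold gpdf
  rw [MeasureTheory.integral_div]
  have : ∀ z : ℝ, Real.exp (-z ^ 2 / 2) = Real.exp (-(1/2) * z ^ 2) := by intro z; ring_nf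
  simp_rw [this, integral_gaussian]
  rw [show ((π : ℝ) / (1/2)) = 2 * π by ring]
  rw [div_self (by positivity : Real.sqrt (2*π) ≠ 0)]

lemma stdCDF_mono : Monotone stdCDF := by
  intro a b hab
  apply setIntegral_mono_set gpdf_integrable.integrableOn
  · exact Filter.Eventually.of_forall fun z => (gpdf_pos z).le
  · exact Filter.Eventually.of_forall (Iic_subset_Iic.2 hab)

lemma stdCDF_nonneg (y : ℝ) : 0 ≤ stdCDF y :=
  setIntegral_nonneg measurableSet_Iic fun z _ => (gpdf_pos z).le

lemma stdCDF_add_neg (y : ℝ) : stdCDF y + stdCDF (-y) = 1 := by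
  have h1 : stdCDF (-y) = ∫ z in Ioi y, gpdf z := by
    unfold stdCDF
    rw [← integral_comp_neg_Ioi]
    congr 1; ext z; unfold gpdf; ring_nf
  show (∫ z in Iic y, gpdf z) + stdCDF (-y) = 1
  rw [h1]
  rw [intervalIntegral.integral_Iic_add_Ioi gpdf_integrable.integrableOn
    gpdf_integrable.integrableOn]
  exact integral_gpdf

lemma stdCDF_le_one (y : ℝ) : stdCDF y ≤ 1 := by
  have := stdCDF_add_neg y
  nlinarith [stdCDF_nonneg (-y)]

lemma hasDerivAt_stdCDF (y : ℝ) : HasDerivAt stdCDF (gpdf y) y := by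
  have key : ∀ b : ℝ, stdCDF b = stdCDF 0 + ∫ z in (0:ℝ)..b, gpdf z := by
    intro b
    rw [← intervalIntegral.integral_Iic_sub_Iic gpdf_integrable.integrableOn
      gpdf_integrable.integrableOn]
    unfold stdCDF gpdf
    ring
  have h : HasDerivAt (fun b => stdCDF 0 + ∫ z in (0:ℝ)..b, gpdf z) (gpdf y) y := by
    apply HasDerivAt.const_add
    exact intervalIntegral.integral_hasDerivAt_right
      (gpdf_integrable.intervalIntegrable)
      (gpdf_cont.stronglyMeasurableAtFilter _ _) gpdf_cont.continuousAt
  have heq : stdCDF = fun b => stdCDF 0 + ∫ z in (0:ℝ)..b, gpdf z := funext key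
  rw [heq]
  exact h

/-- The pre-min expression as a function of time, with `l = log(L/x)`. -/
def gfun (r σ T l t : ℝ) : ℝ :=
  stdCDF ((-l + (r - σ ^ 2 / 2) * (T - t)) / (σ * Real.sqrt (T - t))) +
    Real.exp (l * (2 * r / σ ^ 2 - 1)) *
      stdCDF ((-l - (r - σ ^ 2 / 2) * (T - t)) / (σ * Real.sqrt (T - t)))

lemma cgpdf_eq (r σ l τ : ℝ) (hσ : 0 < σ) (hτ : 0 < τ) :
    Real.exp (l * (2 * r / σ ^ 2 - 1)) *
      gpdf ((-l - (r - σ ^ 2 / 2) * τ) / (σ * Real.sqrt τ)) =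
    gpdf ((-l + (r - σ ^ 2 / 2) * τ) / (σ * Real.sqrt τ)) := by
  obtain ⟨u, hu0, huτ⟩ : ∃ u : ℝ, 0 < u ∧ τ = u ^ 2 :=
    ⟨Real.sqrt τ, Real.sqrt_pos.2 hτ, (Real.sq_sqrt hτ.le).symm⟩
  subst huτ
  rw [Real.sqrt_sq hu0.le]
  unfold gpdf
  rw [← mul_div_assoc, ← Real.exp_add]
  congr 1
  have hσ0 : σ ≠ 0 := hσ.ne'
  field_simp
  ring

lemma gT_hasDeriv (r σ T l : ℝ) (hσ : 0 < σ) {t : ℝ} (ht : t < T) :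
    ∃ d : ℝ, HasDerivAt (gfun r σ T l) d t ∧ (0 ≤ l → d ≤ 0) := by
  set m := r - σ ^ 2 / 2 with hm
  have hτ : 0 < T - t := by linarith
  set s := Real.sqrt (T - t) with hsdef
  have hs : 0 < s := Real.sqrt_pos.2 hτ
  have hs2 : s ^ 2 = T - t := Real.sq_sqrt hτ.le
  have hD0 : σ * s ≠ 0 := by positivity
  have h1 : HasDerivAt (fun u : ℝ => T - u) (-1) t := by
    simpa using (hasDerivAt_id t).const_sub T
  have hu : HasDerivAt (fun u : ℝ => Real.sqrt (T - u)) (-(1 / (2 * s))) t := by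
    have h2 := (Real.hasDerivAt_sqrt hτ.ne').comp t h1
    convert h2 using 1
    all_goals first | rfl | (rw [← hsdef]; ring)
  have hden : HasDerivAt (fun u : ℝ => σ * Real.sqrt (T - u)) (σ * -(1 / (2 * s))) t :=
    hu.const_mul σ
  have hnumA : HasDerivAt (fun u : ℝ => -l + m * (T - u)) (-m) t := by
    have := (h1.const_mul m).const_add (-l)
    convert this using 1
    all_goals first
    | rfl
    | ring
    | (funext u; ring)
  have hnumB : HasDerivAt (fun u : ℝ => -l - m * (T - u)) m t := by
    have := ((h1.const_mul m).fun_neg).const_add (-l)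
    convert this using 1
    all_goals first
    | rfl
    | ring
    | (funext u; ring)
  have hA : HasDerivAt (fun u : ℝ => (-l + m * (T - u)) / (σ * Real.sqrt (T - u)))
      ((-m * (σ * s) - (-l + m * (T - t)) * (σ * -(1 / (2 * s)))) / (σ * s) ^ 2) t := by
    simpa [← hsdef] using hnumA.fun_div hden hD0
  have hB : HasDerivAt (fun u : ℝ => (-l - m * (T - u)) / (σ * Real.sqrt (T - u)))
      ((m * (σ * s) - (-l - m * (T - t)) * (σ * -(1 / (2 * s)))) / (σ * s) ^ 2) t := by
    simpa [← hsdef] using hnumB.fun_div hden hD0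
  set dA := (-m * (σ * s) - (-l + m * (T - t)) * (σ * -(1 / (2 * s)))) / (σ * s) ^ 2 with hdA
  set dB := (m * (σ * s) - (-l - m * (T - t)) * (σ * -(1 / (2 * s)))) / (σ * s) ^ 2 with hdB
  set At := (-l + m * (T - t)) / (σ * s) with hAt
  set Bt := (-l - m * (T - t)) / (σ * s) with hBt
  refine ⟨gpdf At * dA + Real.exp (l * (2 * r / σ ^ 2 - 1)) * (gpdf Bt * dB), ?_, ?_⟩
  · have h1' := (hasDerivAt_stdCDF At).comp t hA
    have h2' := ((hasDerivAt_stdCDF Bt).comp t hB).const_mul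
      (Real.exp (l * (2 * r / σ ^ 2 - 1)))
    unfold gfun
    simpa [← hm, ← hsdef, ← hAt, ← hBt, Function.comp] using h1'.fun_add h2'
  · intro hl
    have hkey : Real.exp (l * (2 * r / σ ^ 2 - 1)) * gpdf Bt = gpdf At := by
      rw [hBt, hAt, hsdef, hm]
      exact cgpdf_eq r σ l (T - t) hσ hτ
    have heq : gpdf At * dA + Real.exp (l * (2 * r / σ ^ 2 - 1)) * (gpdf Bt * dB) =
        gpdf At * (dA + dB) := by
      rw [← mul_assoc, hkey]; ring
    rw [heq]
    have hsum : dA + dB = -l / (σ * s ^ 3) := by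
      rw [hdA, hdB]
      field_simp
      ring
    rw [hsum]
    apply mul_nonpos_of_nonneg_of_nonpos (gpdf_pos At).le
    apply div_nonpos_of_nonpos_of_nonneg (by linarith) (by positivity)

lemma gfun_anti (r σ T l : ℝ) (hσ : 0 < σ) (hl : 0 ≤ l) :
    AntitoneOn (gfun r σ T l) (Iio T) := by
  have hD : ∀ t ∈ Iio T, ∃ d : ℝ, HasDerivAt (gfun r σ T l) d t ∧ (0 ≤ l → d ≤ 0) :=
    fun t ht => gT_hasDeriv r σ T l hσ ht
  apply antitoneOn_of_deriv_nonpos (convex_Iio T)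
  · intro t ht
    obtain ⟨d, hd, -⟩ := hD t ht
    exact hd.continuousAt.continuousWithinAt
  · rw [interior_Iio]
    intro t ht
    obtain ⟨d, hd, -⟩ := hD t ht
    exact hd.differentiableAt.differentiableWithinAt
  · rw [interior_Iio]
    intro t ht
    obtain ⟨d, hd, hd0⟩ := hD t ht
    rw [hd.deriv]
    exact hd0 hl

lemma gfun_nonneg (r σ T l t : ℝ) : 0 ≤ gfun r σ T l t := by
  unfold gfun
  have := stdCDF_nonneg ((-l + (r - σ ^ 2 / 2) * (T - t)) / (σ * Real.sqrt (T - t)))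
  have := stdCDF_nonneg ((-l - (r - σ ^ 2 / 2) * (T - t)) / (σ * Real.sqrt (T - t)))
  positivity

lemma gfun_le_one (r σ T l t : ℝ) (hσ : 0 < σ) (ht : t < T) (hl : 0 ≤ l)
    (hα : 2 * r / σ ^ 2 - 1 ≤ 0) :
    gfun r σ T l t ≤ 1 := by
  have hτ : 0 < T - t := by linarith
  have hs : 0 < σ * Real.sqrt (T - t) := by
    have := Real.sqrt_pos.2 hτ; positivity
  unfold gfun
  set A := (-l + (r - σ ^ 2 / 2) * (T - t)) / (σ * Real.sqrt (T - t)) with hA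
  set B := (-l - (r - σ ^ 2 / 2) * (T - t)) / (σ * Real.sqrt (T - t)) with hB
  have hBA : B ≤ -A := by
    rw [hA, hB, ← neg_div]
    exact (div_le_div_iff_of_pos_right hs).2 (by linarith)
  have hc : Real.exp (l * (2 * r / σ ^ 2 - 1)) * stdCDF B ≤ stdCDF (-A) := by
    calc Real.exp (l * (2 * r / σ ^ 2 - 1)) * stdCDF B
        ≤ 1 * stdCDF (-A) := by
          apply mul_le_mul _ (stdCDF_mono hBA) (stdCDF_nonneg B) zero_le_one
          exact Real.exp_le_one_iff.2 (by nlinarith)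
      _ = stdCDF (-A) := one_mul _
  have := stdCDF_add_neg A
  linarith

lemma gfun_ge_one (r σ T l t : ℝ) (hσ : 0 < σ) (ht : t < T) (hl : l ≤ 0)
    (hα : 2 * r / σ ^ 2 - 1 ≤ 0) : 1 ≤ gfun r σ T l t := by
  have hτ : 0 < T - t := by linarith
  have hs : 0 < σ * Real.sqrt (T - t) := by
    have := Real.sqrt_pos.2 hτ; positivity
  unfold gfun
  set A := (-l + (r - σ ^ 2 / 2) * (T - t)) / (σ * Real.sqrt (T - t)) with hA
  set B := (-l - (r - σ ^ 2 / 2) * (T - t)) / (σ * Real.sqrt (T - t)) with hB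
  have hBA : -A ≤ B := by
    rw [hA, hB, ← neg_div]
    exact (div_le_div_iff_of_pos_right hs).2 (by linarith)
  have h1c : (1 : ℝ) ≤ Real.exp (l * (2 * r / σ ^ 2 - 1)) :=
    Real.one_le_exp (by nlinarith)
  have hc : stdCDF (-A) ≤ Real.exp (l * (2 * r / σ ^ 2 - 1)) * stdCDF B := by
    calc stdCDF (-A) = 1 * stdCDF (-A) := (one_mul _).symm
      _ ≤ Real.exp (l * (2 * r / σ ^ 2 - 1)) * stdCDF B :=
          mul_le_mul h1c (stdCDF_mono hBA) (stdCDF_nonneg _) (by linarith)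
  have := stdCDF_add_neg A
  linarith

lemma gfun_mono_l (r σ T t : ℝ) (hσ : 0 < σ) (ht : t < T)
    (hα : 2 * r / σ ^ 2 - 1 ≤ 0) {l l' : ℝ} (hll : l' ≤ l) :
    gfun r σ T l t ≤ gfun r σ T l' t := by
  have hτ : 0 < T - t := by linarith
  have hs : 0 < σ * Real.sqrt (T - t) := by
    have := Real.sqrt_pos.2 hτ; positivity
  unfold gfun
  have hAA : stdCDF ((-l + (r - σ ^ 2 / 2) * (T - t)) / (σ * Real.sqrt (T - t))) ≤
      stdCDF ((-l' + (r - σ ^ 2 / 2) * (T - t)) / (σ * Real.sqrt (T - t))) :=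
    stdCDF_mono ((div_le_div_iff_of_pos_right hs).2 (by linarith))
  have hBB : stdCDF ((-l - (r - σ ^ 2 / 2) * (T - t)) / (σ * Real.sqrt (T - t))) ≤
      stdCDF ((-l' - (r - σ ^ 2 / 2) * (T - t)) / (σ * Real.sqrt (T - t))) :=
    stdCDF_mono ((div_le_div_iff_of_pos_right hs).2 (by linarith))
  have hcc : Real.exp (l * (2 * r / σ ^ 2 - 1)) ≤ Real.exp (l' * (2 * r / σ ^ 2 - 1)) :=
    Real.exp_le_exp.2 (mul_le_mul_of_nonpos_right hll hα)
  have := mul_le_mul hcc hBB (stdCDF_nonneg _) (Real.exp_pos _).le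
  linarith

/-- Assume `2r < σ²`. Then for every fixed `x > 0` the map
`t ↦ Z(t,x)` is nonincreasing on `[0,T]`, and for every fixed `t ∈ [0,T]` the map
`x ↦ Z(t,x)` is nondecreasing on `(0,∞)`. -/
theorem stmt_8 (r σ L K T : ℝ) (hr : 0 < r) (hσ : 0 < σ) (hL : 0 < L) (hLK : L < K)
    (hT : 0 < T) (hvol : 2 * r < σ ^ 2) :
    (∀ x : ℝ, 0 < x → AntitoneOn (fun t => Zt r σ L T t x) (Icc 0 T)) ∧
    (∀ t ∈ Icc (0 : ℝ) T, MonotoneOn (fun x => Zt r σ L T t x) (Ioi 0)) := by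
  have hσ2 : (0:ℝ) < σ ^ 2 := by positivity
  have hα : 2 * r / σ ^ 2 - 1 ≤ 0 := by
    have : 2 * r / σ ^ 2 < 1 := (div_lt_one hσ2).2 hvol
    linarith
  have hZg : ∀ t x : ℝ, 0 < x → t < T →
      Zt r σ L T t x = min (gfun r σ T (Real.log (L / x)) t) 1 := by
    intro t x hx ht
    unfold Zt gfun
    rw [if_pos ht, Real.rpow_def_of_pos (div_pos hL hx)]
  constructor
  · intro x hx
    by_cases hxL : L ≤ x
    · have hone : ∀ t ∈ Icc (0:ℝ) T, Zt r σ L T t x = 1 := by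
        intro t _
        by_cases htT : t < T
        · rw [hZg t x hx htT, min_eq_right]
          exact gfun_ge_one r σ T _ t hσ htT
            (Real.log_nonpos (by positivity) ((div_le_one hx).2 hxL)) hα
        · unfold Zt; rw [if_neg htT, if_pos hxL]
      intro a ha b hb _
      simp only [hone a ha, hone b hb, le_refl]
    · push_neg at hxL
      have hl : 0 ≤ Real.log (L / x) := Real.log_nonneg ((one_le_div hx).2 hxL.le)
      intro a ha b hb hab
      by_cases hbT : b < T
      · have haT : a < T := lt_of_le_of_lt hab hbT
        simp only
        rw [hZg a x hx haT, hZg b x hx hbT,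
          min_eq_left (gfun_le_one r σ T _ a hσ haT hl hα),
          min_eq_left (gfun_le_one r σ T _ b hσ hbT hl hα)]
        exact (gfun_anti r σ T _ hσ hl) (mem_Iio.2 haT) (mem_Iio.2 hbT) hab
      · have hZb : Zt r σ L T b x = 0 := by
          unfold Zt; rw [if_neg hbT, if_neg (not_le.2 hxL)]
        simp only [hZb]
        by_cases haT : a < T
        · rw [hZg a x hx haT]
          exact le_min (gfun_nonneg _ _ _ _ _) zero_le_one
        · unfold Zt; rw [if_neg haT, if_neg (not_le.2 hxL)]
  · intro t _ x₁ hx₁ x₂ hx₂ h12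
    simp only [mem_Ioi] at hx₁ hx₂
    by_cases htT : t < T
    · simp only
      rw [hZg t x₁ hx₁ htT, hZg t x₂ hx₂ htT]
      refine min_le_min (gfun_mono_l r σ T t hσ htT hα ?_) le_rfl
      rw [Real.log_le_log_iff (div_pos hL hx₂) (div_pos hL hx₁)]
      exact div_le_div_of_nonneg_left hL.le hx₁ h12
    · simp only [Zt, if_neg htT]
      by_cases h1L : L ≤ x₁
      · rw [if_pos h1L, if_pos (h1L.trans h12)]
      · rw [if_neg h1L]
        split <;> norm_num
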